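/- Let f : ℝ → ℝ be concave and nonincreasing. Let m, n ≥ 1, and for 1 ≤ i ≤ m let c_i > 0 and t_i¹ ≤ t_i² be reals with t_i¹ < t_i² and f(t_i²) < f(t_i¹), and for 1 ≤ j ≤ n let d_j > 0 and s_j¹ < s_j² be reals with f(s_j²) < f(s_j¹). Assume s_j¹ ≤ t_i¹ and s_j² ≤ t_i² for all i, j. Then: (∑_{i=1}^{m} c_i·(f(t_i²) − f(t_i¹))) / (∑_{j=1}^{n} d_j·(f(s_j²) − f(s_j¹))) ≥ (∑_{i=1}^{m} c_i·(t_i² − t_i¹)) / (∑_{j=1}^{n} d_j·(s_j² − s_j¹)), and (∑_{j=1}^{n} d_j·(f(s_j¹) − f(s_j²))) / (∑_{i=1}^{m} c_i·(f(t_i¹) − f(t_i²))) ≤ (∑_{j=1}^{n} d_j·(s_j¹ − s_j²)) / (∑_{i=1}^{m} c_i·(t_i¹ − t_i²)). -/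

import Mathlib

/-- Slope comparison for concave functions with shifted intervals. -/
lemma concave_slope_compare (f : ℝ → ℝ) (hconc : ConcaveOn ℝ Set.univ f)
    {x₁ x₂ y₁ y₂ : ℝ} (hx : x₁ < x₂) (hy : y₁ < y₂) (h1 : x₁ ≤ y₁) (h2 : x₂ ≤ y₂) :
    (f y₂ - f y₁) * (x₂ - x₁) ≤ (y₂ - y₁) * (f x₂ - f x₁) := by
  have hg : ConvexOn ℝ Set.univ (-f) := hconc.neg
  have hx12 : (0:ℝ) < x₂ - x₁ := by linarith
  have hy12 : (0:ℝ) < y₂ - y₁ := by linarith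
  have hx1y2 : x₁ < y₂ := lt_of_lt_of_le hx h2
  -- slope of -f on [x₁,x₂] ≤ slope on [x₁,y₂]
  have h1' : ((-f) x₂ - (-f) x₁) / (x₂ - x₁) ≤ ((-f) y₂ - (-f) x₁) / (y₂ - x₁) :=
    hg.secant_mono (Set.mem_univ x₁) (Set.mem_univ x₂) (Set.mem_univ y₂)
      (ne_of_gt hx) (ne_of_gt hx1y2) h2
  -- slope of -f on [x₁,y₂] ≤ slope on [y₁,y₂]
  have h2' : ((-f) x₁ - (-f) y₂) / (x₁ - y₂) ≤ ((-f) y₁ - (-f) y₂) / (y₁ - y₂) :=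
    hg.secant_mono (Set.mem_univ y₂) (Set.mem_univ x₁) (Set.mem_univ y₁)
      (ne_of_lt hx1y2) (ne_of_lt hy) h1
  have e1 : ((-f) x₁ - (-f) y₂) / (x₁ - y₂) = ((-f) y₂ - (-f) x₁) / (y₂ - x₁) := by
    rw [← neg_div_neg_eq]; ring_nf
  have e2 : ((-f) y₁ - (-f) y₂) / (y₁ - y₂) = ((-f) y₂ - (-f) y₁) / (y₂ - y₁) := by
    rw [← neg_div_neg_eq]; ring_nf
  rw [e1, e2] at h2'
  have h3 : ((-f) x₂ - (-f) x₁) / (x₂ - x₁) ≤ ((-f) y₂ - (-f) y₁) / (y₂ - y₁) :=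
    le_trans h1' h2'
  rw [div_le_div_iff₀ hx12 hy12] at h3
  simp only [Pi.neg_apply] at h3
  nlinarith [h3]

theorem concave_ratio_inequality
    (f : ℝ → ℝ) (hconc : ConcaveOn ℝ Set.univ f) (hanti : Antitone f)
    (m n : ℕ) (hm : 1 ≤ m) (hn : 1 ≤ n)
    (c t₁ t₂ : ℕ → ℝ) (d s₁ s₂ : ℕ → ℝ)
    (hc : ∀ i ∈ Finset.Icc 1 m, 0 < c i)
    (ht : ∀ i ∈ Finset.Icc 1 m, t₁ i < t₂ i)
    (hft : ∀ i ∈ Finset.Icc 1 m, f (t₂ i) < f (t₁ i))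
    (hd : ∀ j ∈ Finset.Icc 1 n, 0 < d j)
    (hs : ∀ j ∈ Finset.Icc 1 n, s₁ j < s₂ j)
    (hfs : ∀ j ∈ Finset.Icc 1 n, f (s₂ j) < f (s₁ j))
    (hst₁ : ∀ i ∈ Finset.Icc 1 m, ∀ j ∈ Finset.Icc 1 n, s₁ j ≤ t₁ i)
    (hst₂ : ∀ i ∈ Finset.Icc 1 m, ∀ j ∈ Finset.Icc 1 n, s₂ j ≤ t₂ i) :
    (∑ i ∈ Finset.Icc 1 m, c i * (f (t₂ i) - f (t₁ i)))
        / (∑ j ∈ Finset.Icc 1 n, d j * (f (s₂ j) - f (s₁ j)))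
      ≥ (∑ i ∈ Finset.Icc 1 m, c i * (t₂ i - t₁ i))
        / (∑ j ∈ Finset.Icc 1 n, d j * (s₂ j - s₁ j)) ∧
    (∑ j ∈ Finset.Icc 1 n, d j * (f (s₁ j) - f (s₂ j)))
        / (∑ i ∈ Finset.Icc 1 m, c i * (f (t₁ i) - f (t₂ i)))
      ≤ (∑ j ∈ Finset.Icc 1 n, d j * (s₁ j - s₂ j))
        / (∑ i ∈ Finset.Icc 1 m, c i * (t₁ i - t₂ i)) := by
  set A := ∑ i ∈ Finset.Icc 1 m, c i * (f (t₂ i) - f (t₁ i)) with hA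
  set B := ∑ j ∈ Finset.Icc 1 n, d j * (f (s₂ j) - f (s₁ j)) with hB
  set a := ∑ i ∈ Finset.Icc 1 m, c i * (t₂ i - t₁ i) with ha
  set b := ∑ j ∈ Finset.Icc 1 n, d j * (s₂ j - s₁ j) with hb
  have hmne : (Finset.Icc 1 m).Nonempty := ⟨1, by simp [hm]⟩
  have hnne : (Finset.Icc 1 n).Nonempty := ⟨1, by simp [hn]⟩
  have hApos : 0 < -A := by
    rw [hA, ← Finset.sum_neg_distrib]
    exact Finset.sum_pos (fun i hi => by nlinarith [hc i hi, hft i hi]) hmne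
  have hBpos : 0 < -B := by
    rw [hB, ← Finset.sum_neg_distrib]
    exact Finset.sum_pos (fun j hj => by nlinarith [hd j hj, hfs j hj]) hnne
  have hapos : 0 < a :=
    Finset.sum_pos (fun i hi => by nlinarith [hc i hi, ht i hi]) hmne
  have hbpos : 0 < b :=
    Finset.sum_pos (fun j hj => by nlinarith [hd j hj, hs j hj]) hnne
  -- key: A * b ≤ a * B
  have key : A * b ≤ a * B := by
    rw [hA, hb, ha, hB, Finset.sum_mul_sum, Finset.sum_mul_sum]
    apply Finset.sum_le_sum
    intro i hi
    apply Finset.sum_le_sum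
    intro j hj
    have hslope := concave_slope_compare f hconc (hs j hj) (ht i hi)
      (hst₁ i hi j hj) (hst₂ i hi j hj)
    have hci := hc i hi
    have hdj := hd j hj
    nlinarith [mul_pos hci hdj]
  constructor
  · have h1 : a / b ≤ (-A) / (-B) := by
      rw [div_le_div_iff₀ hbpos hBpos]
      nlinarith
    rw [neg_div_neg_eq] at h1
    exact h1
  · have e1 : (∑ j ∈ Finset.Icc 1 n, d j * (f (s₁ j) - f (s₂ j))) = -B := by
      rw [hB, ← Finset.sum_neg_distrib]; apply Finset.sum_congr rfl; intros; ring
    have e2 : (∑ i ∈ Finset.Icc 1 m, c i * (f (t₁ i) - f (t₂ i))) = -A := by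
      rw [hA, ← Finset.sum_neg_distrib]; apply Finset.sum_congr rfl; intros; ring
    have e3 : (∑ j ∈ Finset.Icc 1 n, d j * (s₁ j - s₂ j)) = -b := by
      rw [hb, ← Finset.sum_neg_distrib]; apply Finset.sum_congr rfl; intros; ring
    have e4 : (∑ i ∈ Finset.Icc 1 m, c i * (t₁ i - t₂ i)) = -a := by
      rw [ha, ← Finset.sum_neg_distrib]; apply Finset.sum_congr rfl; intros; ring
    have h2 : -B / -A ≤ b / a := by
      rw [div_le_div_iff₀ hApos hapos]; nlinarith
    rw [e1, e2, e3, e4, neg_div_neg_eq b a]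
    exact h2
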